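/- Let (G; {ρ_0, …, ρ_{n−1}}) be a string C-group representation of rank n ≥ 4 that is irreducible, i.e. each product ρ_i ρ_{i+1} (0 ≤ i ≤ n−2) has order at least 3. If ρ_2 ρ_3 has odd order, then (G; {ρ_1, ρ_0ρ_2, ρ_3, ρ_4, …, ρ_{n−1}}) is a string C-group representation of G of rank n−1. (Note that ρ_0ρ_2 is an involution since ρ_0 and ρ_2 commute.) -/

import Mathlib

open QuadraticMap

section StringC

variable {G : Type*} [Group G]

/-- `ρ_0, …, ρ_{n-1}` is a sequence of involutions satisfying the string property and
the intersection property; equivalently, it is a string C-group representation of the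
subgroup it generates. -/
def IsStringCSystem {n : ℕ} (ρ : Fin n → G) : Prop :=
  (∀ i, ρ i * ρ i = 1 ∧ ρ i ≠ 1) ∧
  (∀ i j : Fin n, (i : ℕ) + 1 < (j : ℕ) → ρ i * ρ j = ρ j * ρ i) ∧
  (∀ I J : Set (Fin n),
    Subgroup.closure (ρ '' I) ⊓ Subgroup.closure (ρ '' J) =
      Subgroup.closure (ρ '' (I ∩ J)))

/-- A string C-group representation of `G` of rank `n`: a generating sequence of `n`
involutions satisfying the string property and the intersection property. -/
def IsStringCGroupRep {n : ℕ} (ρ : Fin n → G) : Prop :=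
  IsStringCSystem ρ ∧ Subgroup.closure (Set.range ρ) = ⊤

end StringC


namespace SCGAux

open Subgroup

lemma closure_comm {G : Type*} [Group G] {A B : Set G}
    (h : ∀ a ∈ A, ∀ b ∈ B, a * b = b * a) :
    ∀ x ∈ closure A, ∀ y ∈ closure B, x * y = y * x := by
  have h1 : ∀ a ∈ A, ∀ y ∈ closure B, a * y = y * a := by
    intro a ha y hy
    induction hy using closure_induction with
    | mem b hb => exact h a ha b hb
    | one => simp
    | mul b c _ _ pb pc =>
        rw [← mul_assoc, pb, mul_assoc, pc, mul_assoc]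
    | inv b _ pb =>
        have := congrArg (fun z => b⁻¹ * z * b⁻¹) pb
        simpa [mul_assoc] using this.symm
  intro x hx y hy
  induction hx using closure_induction with
  | mem a ha => exact h1 a ha y hy
  | one => simp
  | mul a c _ _ pa pc => rw [mul_assoc, pc, ← mul_assoc, pa, mul_assoc]
  | inv a _ pa =>
      have := congrArg (fun z => a⁻¹ * z * a⁻¹) pa
      simpa [mul_assoc] using this.symm

lemma sup_decomp {G : Type*} [Group G] {A B : Subgroup G}
    (h : ∀ a ∈ A, ∀ b ∈ B, a * b = b * a) :
    ∀ g ∈ A ⊔ B, ∃ a ∈ A, ∃ b ∈ B, g = a * b := by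
  intro g hg
  have : (A ⊔ B : Subgroup G) ≤
      { carrier := {g | ∃ a ∈ A, ∃ b ∈ B, g = a * b}
        one_mem' := ⟨1, one_mem A, 1, one_mem B, by simp⟩
        mul_mem' := by
          rintro x y ⟨a, ha, b, hb, rfl⟩ ⟨a', ha', b', hb', rfl⟩
          exact ⟨a * a', mul_mem ha ha', b * b', mul_mem hb hb', by
            rw [mul_assoc, ← mul_assoc b a' b', ← h a' ha' b hb]
            group⟩
        inv_mem' := by
          rintro x ⟨a, ha, b, hb, rfl⟩
          exact ⟨a⁻¹, inv_mem ha, b⁻¹, inv_mem hb, by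
            rw [mul_inv_rev, h a⁻¹ (inv_mem ha) b⁻¹ (inv_mem hb)]⟩ } := by
    rw [sup_le_iff]
    constructor
    · intro a ha; exact ⟨a, ha, 1, one_mem B, by simp⟩
    · intro b hb; exact ⟨1, one_mem A, b, hb, by simp⟩
  exact this hg

lemma mem_closure_involution {G : Type*} [Group G] {x : G} (hx : x * x = 1) :
    ∀ g ∈ closure ({x} : Set G), g = 1 ∨ g = x := by
  intro g hg
  induction hg using closure_induction with
  | mem a ha => right; simpa using ha
  | one => left; rfl
  | mul a b _ _ pa pb =>
      rcases pa with rfl | rfl <;> rcases pb with rfl | rfl <;> simp [hx]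
  | inv a _ pa =>
      rcases pa with rfl | rfl
      · left; simp
      · right; exact inv_eq_of_mul_eq_one_right hx

lemma mem_closure_pair {G : Type*} [Group G] {x y : G} (hx : x * x = 1) (hy : y * y = 1)
    (hc : x * y = y * x) :
    ∀ g ∈ closure ({x, y} : Set G), g = 1 ∨ g = x ∨ g = y ∨ g = x * y := by
  intro g hg
  have hxyinv : (x * y) * (x * y) = 1 := by
    rw [mul_assoc, ← mul_assoc y x y, ← hc, mul_assoc, hy, mul_one, hx]
  induction hg using closure_induction with
  | mem a ha => rcases ha with rfl | rfl
                · right; left; rfl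
                · right; right; left; rfl
  | one => left; rfl
  | mul a b _ _ pa pb =>
      have e3 : x * (x * y) = y := by rw [← mul_assoc, hx, one_mul]
      have e4 : y * (x * y) = x := by rw [hc, ← mul_assoc, hy, one_mul]
      have e5 : (x * y) * x = y := by rw [mul_assoc, ← hc, e3]
      have e6 : (x * y) * y = x := by rw [mul_assoc, hy, mul_one]
      have e8 : y * x = x * y := hc.symm
      rcases pa with rfl | rfl | rfl | rfl <;> rcases pb with rfl | rfl | rfl | rfl <;>
        simp only [one_mul, mul_one, hx, hy, e3, e4, e5, e6, hxyinv, e8] <;> tauto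
  | inv a _ pa =>
      rcases pa with rfl | rfl | rfl | rfl
      · left; simp
      · right; left; exact inv_eq_of_mul_eq_one_right hx
      · right; right; left; exact inv_eq_of_mul_eq_one_right hy
      · right; right; right; exact inv_eq_of_mul_eq_one_right hxyinv

lemma dihedral_mem {G : Type*} [Group G] {a b : G} (ha : a * a = 1) (hb : b * b = 1) :
    ∀ g ∈ closure ({a, b} : Set G), ∃ k : ℤ, g = (a * b) ^ k ∨ g = (a * b) ^ k * a := by
  intro g hg
  have hainv : a⁻¹ = a := inv_eq_of_mul_eq_one_right ha
  have hbinv : b⁻¹ = b := inv_eq_of_mul_eq_one_right hb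
  have hconj : ∀ m : ℤ, a * (a * b) ^ m * a = ((a * b) ^ m)⁻¹ := by
    intro m
    have h1 : a * (a * b) * a⁻¹ = (a * b)⁻¹ := by
      rw [hainv, mul_inv_rev, hainv, hbinv, ← mul_assoc, ha, one_mul]
    calc a * (a * b) ^ m * a = a * (a * b) ^ m * a⁻¹ := by rw [hainv]
      _ = (a * (a * b) * a⁻¹) ^ m := (conj_zpow ..).symm
      _ = ((a * b)⁻¹) ^ m := by rw [h1]
      _ = ((a * b) ^ m)⁻¹ := by rw [inv_zpow]
  induction hg using closure_induction with
  | mem x hx =>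
      rcases hx with rfl | rfl
      · exact ⟨0, Or.inr (by simp)⟩
      · refine ⟨-1, Or.inr ?_⟩
        rw [zpow_neg_one, mul_inv_rev, hainv, hbinv, mul_assoc, ha, mul_one]
  | one => exact ⟨0, Or.inl (by simp)⟩
  | mul x y _ _ px py =>
      obtain ⟨k, hk⟩ := px
      obtain ⟨l, hl⟩ := py
      rcases hk with rfl | rfl <;> rcases hl with rfl | rfl
      · exact ⟨k + l, Or.inl (by rw [zpow_add])⟩
      · exact ⟨k + l, Or.inr (by rw [zpow_add, mul_assoc])⟩
      · refine ⟨k - l, Or.inr ?_⟩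
        have : (a * b) ^ k * a * (a * b) ^ l = (a * b) ^ k * (a * (a * b) ^ l * a) * a := by
          rw [mul_assoc, mul_assoc, mul_assoc, ha, mul_one]
        rw [this, hconj, ← zpow_neg, ← zpow_add, ← sub_eq_add_neg]
      · refine ⟨k - l, Or.inl ?_⟩
        have : (a * b) ^ k * a * ((a * b) ^ l * a) =
            (a * b) ^ k * (a * (a * b) ^ l * a) := by group
        rw [this, hconj, ← zpow_neg, ← zpow_add, ← sub_eq_add_neg]
  | inv x _ px =>
      obtain ⟨k, hk⟩ := px
      rcases hk with rfl | rfl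
      · exact ⟨-k, Or.inl (by rw [zpow_neg])⟩
      · refine ⟨k, Or.inr (inv_eq_of_mul_eq_one_right ?_)⟩
        calc (a * b) ^ k * a * ((a * b) ^ k * a)
            = (a * b) ^ k * (a * (a * b) ^ k * a) := by group
          _ = (a * b) ^ k * ((a * b) ^ k)⁻¹ := by rw [hconj]
          _ = 1 := by group

/-- parabolic subgroup indexed by a set of naturals -/
def Pv {G : Type*} [Group G] {n : ℕ} (ρ : Fin n → G) (s : Set ℕ) : Subgroup G :=
  closure (ρ '' {j : Fin n | (j : ℕ) ∈ s})

lemma Pv_mono {G : Type*} [Group G] {n : ℕ} (ρ : Fin n → G) {s t : Set ℕ} (h : s ⊆ t) :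
    Pv ρ s ≤ Pv ρ t :=
  closure_mono (Set.image_mono (fun _ hj => h hj))

lemma Pv_inf {G : Type*} [Group G] {n : ℕ} {ρ : Fin n → G}
    (hint : ∀ I J : Set (Fin n),
      closure (ρ '' I) ⊓ closure (ρ '' J) = closure (ρ '' (I ∩ J)))
    (s t : Set ℕ) : Pv ρ s ⊓ Pv ρ t = Pv ρ (s ∩ t) :=
  hint {j : Fin n | (j : ℕ) ∈ s} {j : Fin n | (j : ℕ) ∈ t}

lemma Pv_bot {G : Type*} [Group G] {n : ℕ} (ρ : Fin n → G) : Pv ρ (∅ : Set ℕ) = ⊥ := by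
  have h : {j : Fin n | (j : ℕ) ∈ (∅ : Set ℕ)} = ∅ := by ext j; simp
  rw [Pv, h]
  simp

lemma mem_Pv {G : Type*} [Group G] {n : ℕ} {ρ : Fin n → G} {s : Set ℕ} (j : Fin n)
    (hj : (j : ℕ) ∈ s) : ρ j ∈ Pv ρ s :=
  subset_closure ⟨j, hj, rfl⟩

/-- index set of the untouched generators of a modified set -/
def bset {m : ℕ} (I : Set (Fin m)) : Set ℕ :=
  {x | (x = 1 ∧ ∃ k ∈ I, (k : ℕ) = 0) ∨ ∃ k ∈ I, 2 ≤ (k : ℕ) ∧ x = (k : ℕ) + 1}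

def eset {m : ℕ} (I : Set (Fin m)) : Set ℕ :=
  {x | ∃ k ∈ I, 3 ≤ (k : ℕ) ∧ x = (k : ℕ) + 1}

lemma bset_elem {m : ℕ} {I : Set (Fin m)} {x : ℕ} (h : x ∈ bset I) : x = 1 ∨ 3 ≤ x := by
  rcases h with ⟨rfl, _⟩ | ⟨k, _, hk2, rfl⟩
  · exact Or.inl rfl
  · right; omega

lemma eset_elem {m : ℕ} {I : Set (Fin m)} {x : ℕ} (h : x ∈ eset I) : 4 ≤ x := by
  rcases h with ⟨k, _, hk3, rfl⟩; omega

lemma eset_subset_bset {m : ℕ} {I : Set (Fin m)} : eset I ⊆ bset I := by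
  rintro x ⟨k, hk, h3, rfl⟩
  exact Or.inr ⟨k, hk, by omega, rfl⟩

lemma bset_inter {m : ℕ} (I J : Set (Fin m)) : bset (I ∩ J) = bset I ∩ bset J := by
  ext x
  constructor
  · rintro (⟨rfl, k, ⟨hkI, hkJ⟩, hk0⟩ | ⟨k, ⟨hkI, hkJ⟩, hk2, rfl⟩)
    · exact ⟨Or.inl ⟨rfl, k, hkI, hk0⟩, Or.inl ⟨rfl, k, hkJ, hk0⟩⟩
    · exact ⟨Or.inr ⟨k, hkI, hk2, rfl⟩, Or.inr ⟨k, hkJ, hk2, rfl⟩⟩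
  · rintro ⟨hxI, hxJ⟩
    rcases hxI with ⟨rfl, k, hkI, hk0⟩ | ⟨k, hkI, hk2, rfl⟩
    · rcases hxJ with ⟨_, k', hk'J, hk'0⟩ | ⟨k', hk'J, hk'2, h⟩
      · have hkk : k' = k := Fin.ext (by omega)
        exact Or.inl ⟨rfl, k, ⟨hkI, hkk ▸ hk'J⟩, hk0⟩
      · omega
    · rcases hxJ with ⟨h, _⟩ | ⟨k', hk'J, hk'2, h⟩
      · omega
      · have hkk : k' = k := Fin.ext (by omega)
        exact Or.inr ⟨k, ⟨hkI, hkk ▸ hk'J⟩, hk2, rfl⟩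

lemma eset_inter {m : ℕ} (I J : Set (Fin m)) : eset (I ∩ J) = eset I ∩ eset J := by
  ext x
  constructor
  · rintro ⟨k, ⟨hkI, hkJ⟩, hk3, rfl⟩
    exact ⟨⟨k, hkI, hk3, rfl⟩, ⟨k, hkJ, hk3, rfl⟩⟩
  · rintro ⟨⟨k, hkI, hk3, rfl⟩, ⟨k', hk'J, hk'3, h⟩⟩
    have hkk : k' = k := Fin.ext (by omega)
    exact ⟨k, ⟨hkI, hkk ▸ hk'J⟩, hk3, rfl⟩

lemma bset_inter_eset {m : ℕ} (I J : Set (Fin m)) : bset I ∩ eset J = eset (I ∩ J) := by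
  ext x
  constructor
  · rintro ⟨hxI, ⟨k, hkJ, hk3, rfl⟩⟩
    rcases hxI with ⟨h, _⟩ | ⟨k', hk'I, hk'2, h⟩
    · omega
    · have hkk : k' = k := Fin.ext (by omega)
      exact ⟨k, ⟨hkk ▸ hk'I, hkJ⟩, hk3, rfl⟩
  · rintro ⟨k, ⟨hkI, hkJ⟩, hk3, rfl⟩
    exact ⟨Or.inr ⟨k, hkI, by omega, rfl⟩, ⟨k, hkJ, hk3, rfl⟩⟩

lemma merge_exists {m : ℕ} {I J : Set (Fin m)} {v : ℕ} (hI : ∃ k ∈ I, (k : ℕ) = v)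
    (hJ : ∃ k ∈ J, (k : ℕ) = v) : ∃ k ∈ I ∩ J, (k : ℕ) = v := by
  obtain ⟨k, hk, rfl⟩ := hI
  obtain ⟨k', hk', hv⟩ := hJ
  have hkk : k' = k := Fin.ext hv
  exact ⟨k, ⟨hk, hkk ▸ hk'⟩, rfl⟩

end SCGAux

open SCGAux in

/-- Theorem 4.2 (rank reduction): if `(G; {ρ_0,…,ρ_{n-1}})` is an irreducible string
C-group representation of rank `n ≥ 4` and `ρ_2 ρ_3` has odd order, then
`(G; {ρ_1, ρ_0ρ_2, ρ_3, …, ρ_{n-1}})` is a string C-group representation of rank `n - 1`. -/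
theorem statement13 {G : Type*} [Group G] (n : ℕ) (hn : 4 ≤ n) (ρ : Fin n → G)
    (hrep : IsStringCGroupRep ρ)
    (hirr : ∀ i j : Fin n, (j : ℕ) = (i : ℕ) + 1 → 3 ≤ orderOf (ρ i * ρ j))
    (hodd : Odd (orderOf (ρ ⟨2, by omega⟩ * ρ ⟨3, by omega⟩))) :
    IsStringCGroupRep (fun k : Fin (n - 1) =>
      if (k : ℕ) = 0 then ρ ⟨1, by omega⟩
      else if (k : ℕ) = 1 then ρ ⟨0, by omega⟩ * ρ ⟨2, by omega⟩
      else ρ ⟨(k : ℕ) + 1, by have := k.isLt; omega⟩) := by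
  classical
  open Subgroup SCGAux in
  obtain ⟨⟨hinv, hcomm, hint⟩, hgen⟩ := hrep
  have h0n : 0 < n := by omega
  have h1n : 1 < n := by omega
  have h2n : 2 < n := by omega
  have h3n : 3 < n := by omega
  have hsq : ∀ i : Fin n, ρ i * ρ i = 1 := fun i => (hinv i).1
  have hne : ∀ i : Fin n, ρ i ≠ 1 := fun i => (hinv i).2
  have hrinv : ∀ i : Fin n, (ρ i)⁻¹ = ρ i := fun i => inv_eq_of_mul_eq_one_right (hsq i)
  have hρeq : ∀ (j j' : Fin n), (j : ℕ) = (j' : ℕ) → ρ j = ρ j' :=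
    fun j j' h => congrArg ρ (Fin.ext h)
  set b : G := ρ ⟨0, h0n⟩ * ρ ⟨2, h2n⟩ with hbdef
  set τ : Fin (n - 1) → G := fun k : Fin (n - 1) =>
      if (k : ℕ) = 0 then ρ ⟨1, by omega⟩
      else if (k : ℕ) = 1 then ρ ⟨0, by omega⟩ * ρ ⟨2, by omega⟩
      else ρ ⟨(k : ℕ) + 1, by have := k.isLt; omega⟩ with hτdef
  show IsStringCGroupRep τ
  -- evaluation lemmas
  have hτ0 : ∀ k : Fin (n - 1), (k : ℕ) = 0 → τ k = ρ ⟨1, h1n⟩ := by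
    intro k hk
    simp only [hτdef]
    rw [if_pos hk]
  have hτ1 : ∀ k : Fin (n - 1), (k : ℕ) = 1 → τ k = b := by
    intro k hk
    simp only [hτdef]
    rw [if_neg (by omega), if_pos hk, hbdef]
  have hτhi : ∀ (k : Fin (n - 1)) (j : Fin n), 2 ≤ (k : ℕ) → (j : ℕ) = (k : ℕ) + 1 →
      τ k = ρ j := by
    intro k j h2 hj
    have hj' : j = ⟨(k : ℕ) + 1, by have := k.isLt; omega⟩ := Fin.ext hj
    rw [hj']
    simp only [hτdef]
    rw [if_neg (by omega), if_neg (by omega)]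
  -- basic commutation facts
  have h02 : ρ ⟨0, h0n⟩ * ρ ⟨2, h2n⟩ = ρ ⟨2, h2n⟩ * ρ ⟨0, h0n⟩ :=
    hcomm _ _ (show (0 : ℕ) + 1 < 2 by omega)
  have hb_sq : b * b = 1 := by
    rw [hbdef]
    calc ρ ⟨0, h0n⟩ * ρ ⟨2, h2n⟩ * (ρ ⟨0, h0n⟩ * ρ ⟨2, h2n⟩)
        = ρ ⟨0, h0n⟩ * (ρ ⟨2, h2n⟩ * ρ ⟨0, h0n⟩) * ρ ⟨2, h2n⟩ := by group
      _ = ρ ⟨0, h0n⟩ * (ρ ⟨0, h0n⟩ * ρ ⟨2, h2n⟩) * ρ ⟨2, h2n⟩ := by rw [← h02]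
      _ = (ρ ⟨0, h0n⟩ * ρ ⟨0, h0n⟩) * (ρ ⟨2, h2n⟩ * ρ ⟨2, h2n⟩) := by group
      _ = 1 := by rw [hsq, hsq, one_mul]
  have hb_inv : b⁻¹ = b := inv_eq_of_mul_eq_one_right hb_sq
  have hPv := Pv_inf (ρ := ρ) hint
  -- b ≠ 1
  have hb_ne : b ≠ 1 := by
    intro h
    have h02' : ρ ⟨0, h0n⟩ = ρ ⟨2, h2n⟩ := by
      have := eq_inv_of_mul_eq_one_left (hbdef ▸ h)
      rwa [hrinv] at this
    have hm : ρ ⟨0, h0n⟩ ∈ Pv ρ ({0} : Set ℕ) ⊓ Pv ρ ({2} : Set ℕ) := by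
      refine Subgroup.mem_inf.mpr ⟨mem_Pv _ rfl, ?_⟩
      rw [h02']
      exact mem_Pv _ rfl
    rw [hPv, show ({0} : Set ℕ) ∩ {2} = ∅ by ext x; simp, Pv_bot] at hm
    exact hne _ (Subgroup.mem_bot.mp hm)
  -- the odd-order trick
  have hρ0pow : (b * ρ ⟨3, h3n⟩) ^ (orderOf (ρ ⟨2, h2n⟩ * ρ ⟨3, h3n⟩)) = ρ ⟨0, h0n⟩ := by
    have hodd' : Odd (orderOf (ρ ⟨2, h2n⟩ * ρ ⟨3, h3n⟩)) := hodd
    obtain ⟨mo, hmo⟩ := hodd'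
    have hc : ρ ⟨0, h0n⟩ * (ρ ⟨2, h2n⟩ * ρ ⟨3, h3n⟩) = (ρ ⟨2, h2n⟩ * ρ ⟨3, h3n⟩) * ρ ⟨0, h0n⟩ := by
      have c2 := hcomm ⟨0, h0n⟩ ⟨2, h2n⟩ (show (0 : ℕ) + 1 < 2 by omega)
      have c3 := hcomm ⟨0, h0n⟩ ⟨3, h3n⟩ (show (0 : ℕ) + 1 < 3 by omega)
      calc ρ ⟨0, h0n⟩ * (ρ ⟨2, h2n⟩ * ρ ⟨3, h3n⟩)
          = (ρ ⟨0, h0n⟩ * ρ ⟨2, h2n⟩) * ρ ⟨3, h3n⟩ := by group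
        _ = (ρ ⟨2, h2n⟩ * ρ ⟨0, h0n⟩) * ρ ⟨3, h3n⟩ := by rw [c2]
        _ = ρ ⟨2, h2n⟩ * (ρ ⟨0, h0n⟩ * ρ ⟨3, h3n⟩) := by group
        _ = ρ ⟨2, h2n⟩ * (ρ ⟨3, h3n⟩ * ρ ⟨0, h0n⟩) := by rw [c3]
        _ = (ρ ⟨2, h2n⟩ * ρ ⟨3, h3n⟩) * ρ ⟨0, h0n⟩ := by group
    have h1 : (ρ ⟨0, h0n⟩ * (ρ ⟨2, h2n⟩ * ρ ⟨3, h3n⟩)) ^ (orderOf (ρ ⟨2, h2n⟩ * ρ ⟨3, h3n⟩))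
        = ρ ⟨0, h0n⟩ ^ (orderOf (ρ ⟨2, h2n⟩ * ρ ⟨3, h3n⟩))
          * (ρ ⟨2, h2n⟩ * ρ ⟨3, h3n⟩) ^ (orderOf (ρ ⟨2, h2n⟩ * ρ ⟨3, h3n⟩)) :=
      Commute.mul_pow hc _
    have h2 : ρ ⟨0, h0n⟩ ^ (orderOf (ρ ⟨2, h2n⟩ * ρ ⟨3, h3n⟩)) = ρ ⟨0, h0n⟩ := by
      rw [hmo, pow_succ, pow_mul, pow_two, hsq, one_pow, one_mul]
    calc (b * ρ ⟨3, h3n⟩) ^ (orderOf (ρ ⟨2, h2n⟩ * ρ ⟨3, h3n⟩))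
        = (ρ ⟨0, h0n⟩ * (ρ ⟨2, h2n⟩ * ρ ⟨3, h3n⟩)) ^ (orderOf (ρ ⟨2, h2n⟩ * ρ ⟨3, h3n⟩)) := by
          rw [hbdef, mul_assoc]
      _ = ρ ⟨0, h0n⟩ := by rw [h1, h2, pow_orderOf_eq_one, mul_one]
  -- commutation of ρ1 and b with high generators
  have hρ1high : ∀ j : Fin n, 3 ≤ (j : ℕ) → ρ ⟨1, h1n⟩ * ρ j = ρ j * ρ ⟨1, h1n⟩ :=
    fun j hj => hcomm _ _ (show (1 : ℕ) + 1 < (j : ℕ) by omega)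
  have hbhigh : ∀ j : Fin n, 4 ≤ (j : ℕ) → b * ρ j = ρ j * b := by
    intro j hj
    have c0 := hcomm ⟨0, h0n⟩ j (show (0 : ℕ) + 1 < (j : ℕ) by omega)
    have c2 := hcomm ⟨2, h2n⟩ j (show (2 : ℕ) + 1 < (j : ℕ) by omega)
    rw [hbdef]
    calc ρ ⟨0, h0n⟩ * ρ ⟨2, h2n⟩ * ρ j = ρ ⟨0, h0n⟩ * (ρ ⟨2, h2n⟩ * ρ j) := by group
      _ = ρ ⟨0, h0n⟩ * (ρ j * ρ ⟨2, h2n⟩) := by rw [c2]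
      _ = (ρ ⟨0, h0n⟩ * ρ j) * ρ ⟨2, h2n⟩ := by group
      _ = (ρ j * ρ ⟨0, h0n⟩) * ρ ⟨2, h2n⟩ := by rw [c0]
      _ = ρ j * (ρ ⟨0, h0n⟩ * ρ ⟨2, h2n⟩) := by group
  -- the dihedral subgroup D = <rho1, b>
  set Dgrp : Subgroup G := Subgroup.closure ({ρ ⟨1, h1n⟩, b} : Set G) with hDdef
  have hρ0_notin : ρ ⟨0, h0n⟩ ∉ Dgrp := by
    intro hmem
    rw [hDdef] at hmem
    obtain ⟨k, hk⟩ := dihedral_mem (hsq ⟨1, h1n⟩) hb_sq _ hmem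
    set t : G := ρ ⟨1, h1n⟩ * b with htdef
    have hconj : ∀ m : ℤ, ρ ⟨1, h1n⟩ * t ^ m * ρ ⟨1, h1n⟩ = (t ^ m)⁻¹ := by
      intro m
      have h1 : ρ ⟨1, h1n⟩ * t * (ρ ⟨1, h1n⟩)⁻¹ = t⁻¹ := by
        rw [hrinv, htdef, mul_inv_rev, hb_inv, hrinv, ← mul_assoc, hsq, one_mul]
      calc ρ ⟨1, h1n⟩ * t ^ m * ρ ⟨1, h1n⟩
          = ρ ⟨1, h1n⟩ * t ^ m * (ρ ⟨1, h1n⟩)⁻¹ := by rw [hrinv]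
        _ = (ρ ⟨1, h1n⟩ * t * (ρ ⟨1, h1n⟩)⁻¹) ^ m := (conj_zpow ..).symm
        _ = (t⁻¹) ^ m := by rw [h1]
        _ = (t ^ m)⁻¹ := by rw [inv_zpow]
    have habs : ∀ (i j : Fin n), (j : ℕ) = (i : ℕ) + 1 → ρ i * ρ j = ρ j * ρ i → False := by
      intro i j hij hc
      have hpow : (ρ i * ρ j) ^ 2 = 1 := by
        rw [pow_two]
        calc ρ i * ρ j * (ρ i * ρ j) = ρ i * (ρ j * ρ i) * ρ j := by group
          _ = ρ i * (ρ i * ρ j) * ρ j := by rw [← hc]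
          _ = (ρ i * ρ i) * (ρ j * ρ j) := by group
          _ = 1 := by rw [hsq, hsq, one_mul]
      have hle : orderOf (ρ i * ρ j) ≤ 2 :=
        Nat.le_of_dvd (by norm_num) (orderOf_dvd_of_pow_eq_one hpow)
      have := hirr i j hij
      omega
    rcases hk with hk | hk
    · -- ρ0 = t^k : ρ0 commutes with ρ1
      have he : ρ ⟨1, h1n⟩ * ρ ⟨0, h0n⟩ * ρ ⟨1, h1n⟩ = ρ ⟨0, h0n⟩ := by
        rw [hk, hconj, ← hk, hrinv]
      have hc : ρ ⟨0, h0n⟩ * ρ ⟨1, h1n⟩ = ρ ⟨1, h1n⟩ * ρ ⟨0, h0n⟩ := by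
        have h5 : ρ ⟨0, h0n⟩ * ρ ⟨1, h1n⟩ = (ρ ⟨1, h1n⟩ * ρ ⟨0, h0n⟩ * ρ ⟨1, h1n⟩) * ρ ⟨1, h1n⟩ := by
          rw [he]
        rw [h5, mul_assoc, hsq, mul_one]
      exact habs ⟨0, h0n⟩ ⟨1, h1n⟩ rfl hc
    · -- ρ0 = t^k * ρ1 : then ρ2 = t^(k+1) commutes with ρ1
      have hρ2t : ρ ⟨2, h2n⟩ = t ^ (k + 1) := by
        have : ρ ⟨2, h2n⟩ = ρ ⟨0, h0n⟩ * b := by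
          rw [hbdef, ← mul_assoc, hsq, one_mul]
        rw [this, hk, mul_assoc, ← htdef, zpow_add_one]
      have he : ρ ⟨1, h1n⟩ * ρ ⟨2, h2n⟩ * ρ ⟨1, h1n⟩ = ρ ⟨2, h2n⟩ := by
        rw [hρ2t, hconj, ← hρ2t, hrinv]
      have hc : ρ ⟨1, h1n⟩ * ρ ⟨2, h2n⟩ = ρ ⟨2, h2n⟩ * ρ ⟨1, h1n⟩ := by
        have h5 : ρ ⟨2, h2n⟩ * ρ ⟨1, h1n⟩ = (ρ ⟨1, h1n⟩ * ρ ⟨2, h2n⟩ * ρ ⟨1, h1n⟩) * ρ ⟨1, h1n⟩ := by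
          rw [he]
        rw [h5, mul_assoc, hsq, mul_one]
      exact habs ⟨1, h1n⟩ ⟨2, h2n⟩ rfl hc
  have hb_memD : b ∈ Dgrp := by
    rw [hDdef]; exact Subgroup.subset_closure (Set.mem_insert_iff.mpr (Or.inr rfl))
  have hρ2_notin : ρ ⟨2, h2n⟩ ∉ Dgrp := by
    intro h
    refine hρ0_notin ?_
    have : ρ ⟨0, h0n⟩ = b * ρ ⟨2, h2n⟩ := by
      rw [hbdef, mul_assoc, hsq, mul_one]
    rw [this]
    exact mul_mem hb_memD h
  have hP02 : Pv ρ ({0, 2} : Set ℕ) = Subgroup.closure ({ρ ⟨0, h0n⟩, ρ ⟨2, h2n⟩} : Set G) := by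
    rw [Pv]
    congr 1
    ext x
    constructor
    · rintro ⟨j, hj, rfl⟩
      rcases hj with h | h
      · exact Or.inl (hρeq _ _ h)
      · exact Or.inr (hρeq _ _ h)
    · rintro (rfl | rfl)
      · exact ⟨⟨0, h0n⟩, Or.inl rfl, rfl⟩
      · exact ⟨⟨2, h2n⟩, Or.inr rfl, rfl⟩
  have hD02 : ∀ g ∈ Dgrp, g ∈ Pv ρ ({0, 2} : Set ℕ) → g = 1 ∨ g = b := by
    intro g hg hg2
    rw [hP02] at hg2
    rcases mem_closure_pair (hsq _) (hsq _) h02 g hg2 with rfl | rfl | rfl | h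
    · exact Or.inl rfl
    · exact absurd hg hρ0_notin
    · exact absurd hg hρ2_notin
    · right; rw [hbdef]; exact h
  -- subgroup bounds
  have hD_le012 : Dgrp ≤ Pv ρ ({0, 1, 2} : Set ℕ) := by
    rw [hDdef, Subgroup.closure_le]
    rintro x (rfl | rfl)
    · exact mem_Pv ⟨1, h1n⟩ (by simp)
    · rw [hbdef]
      exact mul_mem (mem_Pv ⟨0, h0n⟩ (by simp)) (mem_Pv ⟨2, h2n⟩ (by simp))
  have hCb_leD : Subgroup.closure ({b} : Set G) ≤ Dgrp := by
    rw [hDdef]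
    exact Subgroup.closure_mono (by simp)
  have hCb_le02 : Subgroup.closure ({b} : Set G) ≤ Pv ρ ({0, 2} : Set ℕ) := by
    rw [Subgroup.closure_le]
    rintro x rfl
    rw [hbdef]
    exact mul_mem (mem_Pv ⟨0, h0n⟩ (by simp)) (mem_Pv ⟨2, h2n⟩ (by simp))
  -- commuting of D with high parabolics, and decompositions
  have hDhi : ∀ s : Set ℕ, (∀ x ∈ s, 4 ≤ x) → ∀ d ∈ Dgrp, ∀ e ∈ Pv ρ s, d * e = e * d := by
    intro s hs
    rw [hDdef]
    refine closure_comm ?_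
    rintro a (rfl | rfl) x ⟨j, hj, rfl⟩
    · exact hρ1high j (by have := hs _ hj; omega)
    · exact hbhigh j (hs _ hj)
  have hdecD : ∀ s : Set ℕ, (∀ x ∈ s, 4 ≤ x) → ∀ g ∈ Dgrp ⊔ Pv ρ s,
      ∃ d ∈ Dgrp, ∃ e ∈ Pv ρ s, g = d * e :=
    fun s hs => sup_decomp (hDhi s hs)
  have hdecC : ∀ s : Set ℕ, (∀ x ∈ s, 4 ≤ x) → ∀ g ∈ Subgroup.closure ({b} : Set G) ⊔ Pv ρ s,
      ∃ u ∈ Subgroup.closure ({b} : Set G), ∃ e ∈ Pv ρ s, g = u * e :=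
    fun s hs => sup_decomp (fun a ha e he => hDhi s hs a (hCb_leD ha) e he)
  -- structure of the new parabolic subgroups
  have hTA : ∀ I : Set (Fin (n - 1)), (∀ k ∈ I, (k : ℕ) ≠ 1) →
      Subgroup.closure (τ '' I) = Pv ρ (bset I) := by
    intro I hI
    have himg : τ '' I = ρ '' {j : Fin n | (j : ℕ) ∈ bset I} := by
      ext x
      constructor
      · rintro ⟨k, hk, rfl⟩
        by_cases hk0 : (k : ℕ) = 0
        · exact ⟨⟨1, h1n⟩, Or.inl ⟨rfl, k, hk, hk0⟩, (hτ0 k hk0).symm⟩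
        · have hk2 : 2 ≤ (k : ℕ) := by have := hI k hk; omega
          exact ⟨⟨(k : ℕ) + 1, by have := k.isLt; omega⟩, Or.inr ⟨k, hk, hk2, rfl⟩,
            (hτhi k _ hk2 rfl).symm⟩
      · rintro ⟨j, hj, rfl⟩
        rcases hj with ⟨hx1, k, hk, hk0⟩ | ⟨k, hk, hk2, hx⟩
        · exact ⟨k, hk, (hτ0 k hk0).trans (hρeq ⟨1, h1n⟩ j (show (1 : ℕ) = (j : ℕ) by omega))⟩
        · exact ⟨k, hk, hτhi k j hk2 hx⟩
    rw [himg]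
    rfl
  have hTC : ∀ I : Set (Fin (n - 1)), (∃ k ∈ I, (k : ℕ) = 1) → (∀ k ∈ I, (k : ℕ) ≠ 0) →
      (∀ k ∈ I, (k : ℕ) ≠ 2) →
      Subgroup.closure (τ '' I) = Subgroup.closure ({b} : Set G) ⊔ Pv ρ (eset I) := by
    intro I h1 h0 h2
    have himg : τ '' I = {b} ∪ ρ '' {j : Fin n | (j : ℕ) ∈ eset I} := by
      ext x
      constructor
      · rintro ⟨k, hk, rfl⟩
        rcases Nat.lt_or_ge (k : ℕ) 3 with hlt | hge
        · have hk1 : (k : ℕ) = 1 := by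
            have := h0 k hk; have := h2 k hk; omega
          exact Or.inl (hτ1 k hk1)
        · exact Or.inr ⟨⟨(k : ℕ) + 1, by have := k.isLt; omega⟩, ⟨k, hk, hge, rfl⟩,
            (hτhi k _ (by omega) rfl).symm⟩
      · rintro (rfl | ⟨j, ⟨k, hk, hk3, hx⟩, rfl⟩)
        · obtain ⟨k1, hk1I, hk1⟩ := h1
          exact ⟨k1, hk1I, hτ1 k1 hk1⟩
        · exact ⟨k, hk, hτhi k j (by omega) hx⟩
    rw [himg, Subgroup.closure_union]
    rfl
  have hTD : ∀ I : Set (Fin (n - 1)), (∃ k ∈ I, (k : ℕ) = 1) → (∀ k ∈ I, (k : ℕ) ≠ 2) →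
      (∃ k ∈ I, (k : ℕ) = 0) →
      Subgroup.closure (τ '' I) = Dgrp ⊔ Pv ρ (eset I) := by
    intro I h1 h2 h0
    have himg : τ '' I = {ρ ⟨1, h1n⟩, b} ∪ ρ '' {j : Fin n | (j : ℕ) ∈ eset I} := by
      ext x
      constructor
      · rintro ⟨k, hk, rfl⟩
        rcases Nat.lt_or_ge (k : ℕ) 3 with hlt | hge
        · have hk01 : (k : ℕ) = 0 ∨ (k : ℕ) = 1 := by
            have := h2 k hk; omega
          rcases hk01 with hk0 | hk1
          · exact Or.inl (Or.inl (hτ0 k hk0))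
          · exact Or.inl (Or.inr (hτ1 k hk1))
        · exact Or.inr ⟨⟨(k : ℕ) + 1, by have := k.isLt; omega⟩, ⟨k, hk, hge, rfl⟩,
            (hτhi k _ (by omega) rfl).symm⟩
      · rintro ((rfl | rfl) | ⟨j, ⟨k, hk, hk3, hx⟩, rfl⟩)
        · obtain ⟨k0, hk0I, hk0⟩ := h0
          exact ⟨k0, hk0I, hτ0 k0 hk0⟩
        · obtain ⟨k1, hk1I, hk1⟩ := h1
          exact ⟨k1, hk1I, hτ1 k1 hk1⟩
        · exact ⟨k, hk, hτhi k j (by omega) hx⟩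
    rw [himg, Subgroup.closure_union, hDdef]
    rfl
  have hTB : ∀ I : Set (Fin (n - 1)), (∃ k ∈ I, (k : ℕ) = 1) → (∃ k ∈ I, (k : ℕ) = 2) →
      Subgroup.closure (τ '' I) = Pv ρ (({0, 2} : Set ℕ) ∪ bset I) := by
    intro I h1 h2
    obtain ⟨κ1, hκ1I, hκ1⟩ := h1
    obtain ⟨κ2, hκ2I, hκ2⟩ := h2
    have hbmem : b ∈ Subgroup.closure (τ '' I) :=
      Subgroup.subset_closure ⟨κ1, hκ1I, hτ1 κ1 hκ1⟩
    have hρ3mem : ρ ⟨3, h3n⟩ ∈ Subgroup.closure (τ '' I) :=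
      Subgroup.subset_closure ⟨κ2, hκ2I, hτhi κ2 ⟨3, h3n⟩ (by omega) (show (3 : ℕ) = (κ2 : ℕ) + 1 by omega)⟩
    have hρ0mem : ρ ⟨0, h0n⟩ ∈ Subgroup.closure (τ '' I) := by
      rw [← hρ0pow]
      exact pow_mem (mul_mem hbmem hρ3mem) _
    have hρ2mem : ρ ⟨2, h2n⟩ ∈ Subgroup.closure (τ '' I) := by
      have h5 : ρ ⟨0, h0n⟩ * b = ρ ⟨2, h2n⟩ := by
        rw [hbdef, ← mul_assoc, hsq, one_mul]
      rw [← h5]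
      exact mul_mem hρ0mem hbmem
    refine le_antisymm ((Subgroup.closure_le _).mpr ?_) ((Subgroup.closure_le _).mpr ?_)
    · rintro x ⟨k, hk, rfl⟩
      by_cases hk0 : (k : ℕ) = 0
      · rw [hτ0 k hk0]
        exact mem_Pv ⟨1, h1n⟩ (Or.inr (Or.inl ⟨rfl, k, hk, hk0⟩))
      · by_cases hk1 : (k : ℕ) = 1
        · rw [hτ1 k hk1, hbdef]
          exact mul_mem (mem_Pv ⟨0, h0n⟩ (Or.inl (Or.inl rfl)))
            (mem_Pv ⟨2, h2n⟩ (Or.inl (Or.inr rfl)))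
        · have hk2 : 2 ≤ (k : ℕ) := by omega
          rw [hτhi k ⟨(k : ℕ) + 1, by have := k.isLt; omega⟩ hk2 rfl]
          exact mem_Pv _ (Or.inr (Or.inr ⟨k, hk, hk2, rfl⟩))
    · rintro x ⟨j, hj, rfl⟩
      rcases hj with h | hb'
      · rcases h with h | h
        · rw [hρeq j ⟨0, h0n⟩ h]
          exact hρ0mem
        · rw [hρeq j ⟨2, h2n⟩ h]
          exact hρ2mem
      · rcases hb' with ⟨hx1, k, hk, hk0⟩ | ⟨k, hk, hk2, hx⟩
        · rw [hρeq j ⟨1, h1n⟩ hx1]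
          exact Subgroup.subset_closure ⟨k, hk, hτ0 k hk0⟩
        · exact Subgroup.subset_closure ⟨k, hk, hτhi k j hk2 hx⟩
  have hes : ∀ (J : Set (Fin (n - 1))), ∀ x ∈ eset J, 4 ≤ x := fun _ x hx => eset_elem hx
  -- Case lemmas for the intersection property
  have hAA : ∀ I J : Set (Fin (n - 1)), (∀ k ∈ I, (k : ℕ) ≠ 1) → (∀ k ∈ J, (k : ℕ) ≠ 1) →
      ∀ g, g ∈ Subgroup.closure (τ '' I) → g ∈ Subgroup.closure (τ '' J) →
      g ∈ Subgroup.closure (τ '' (I ∩ J)) := by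
    intro I J hI1 hJ1 g hgI hgJ
    rw [hTA I hI1] at hgI
    rw [hTA J hJ1] at hgJ
    rw [hTA (I ∩ J) (fun k hk => hI1 k hk.1), bset_inter, ← hPv]
    exact Subgroup.mem_inf.mpr ⟨hgI, hgJ⟩
  have hAB : ∀ I J : Set (Fin (n - 1)), (∀ k ∈ I, (k : ℕ) ≠ 1) → (∃ k ∈ J, (k : ℕ) = 1) →
      (∃ k ∈ J, (k : ℕ) = 2) →
      ∀ g, g ∈ Subgroup.closure (τ '' I) → g ∈ Subgroup.closure (τ '' J) →
      g ∈ Subgroup.closure (τ '' (I ∩ J)) := by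
    intro I J hI1 hJ1 hJ2 g hgI hgJ
    rw [hTA I hI1] at hgI
    rw [hTB J hJ1 hJ2] at hgJ
    rw [hTA (I ∩ J) (fun k hk => hI1 k hk.1)]
    have hg : g ∈ Pv ρ (bset I ∩ (({0, 2} : Set ℕ) ∪ bset J)) := by
      rw [← hPv]
      exact Subgroup.mem_inf.mpr ⟨hgI, hgJ⟩
    refine Pv_mono ρ ?_ hg
    rintro x ⟨hxI, hxU⟩
    rcases hxU with hx02 | hxJ
    · rcases bset_elem hxI with h | h <;>
        simp only [Set.mem_insert_iff, Set.mem_singleton_iff] at hx02 <;> omega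
    · rw [bset_inter]
      exact ⟨hxI, hxJ⟩
  have hAC : ∀ I J : Set (Fin (n - 1)), (∀ k ∈ I, (k : ℕ) ≠ 1) → (∃ k ∈ J, (k : ℕ) = 1) →
      (∀ k ∈ J, (k : ℕ) ≠ 0) → (∀ k ∈ J, (k : ℕ) ≠ 2) →
      ∀ g, g ∈ Subgroup.closure (τ '' I) → g ∈ Subgroup.closure (τ '' J) →
      g ∈ Subgroup.closure (τ '' (I ∩ J)) := by
    intro I J hI1 hJ1 hJ0 hJ2 g hgI hgJ
    rw [hTA I hI1] at hgI
    rw [hTC J hJ1 hJ0 hJ2] at hgJ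
    obtain ⟨u, hu, e, he, rfl⟩ := hdecC (eset J) (hes J) _ hgJ
    have hu2 : u ∈ Pv ρ (({0, 2} : Set ℕ) ∩ (bset I ∪ eset J)) := by
      rw [← hPv]
      refine Subgroup.mem_inf.mpr ⟨hCb_le02 hu, ?_⟩
      have h5 : u = (u * e) * e⁻¹ := by group
      rw [h5]
      exact mul_mem (Pv_mono ρ Set.subset_union_left hgI)
        (Pv_mono ρ Set.subset_union_right (inv_mem he))
    have hempty : (({0, 2} : Set ℕ) ∩ (bset I ∪ eset J)) = ∅ := by
      ext x
      simp only [Set.mem_inter_iff, Set.mem_union, Set.mem_insert_iff, Set.mem_singleton_iff,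
        Set.mem_empty_iff_false, iff_false, not_and]
      rintro h02 (hx | hx)
      · rcases bset_elem hx with h | h <;> omega
      · have := eset_elem hx; omega
    rw [hempty, Pv_bot] at hu2
    have hu1 : u = 1 := Subgroup.mem_bot.mp hu2
    rw [hu1, one_mul] at hgI ⊢
    rw [hTA (I ∩ J) (fun k hk => hI1 k hk.1)]
    have he2 : e ∈ Pv ρ (bset I ∩ eset J) := by
      rw [← hPv]
      exact Subgroup.mem_inf.mpr ⟨hgI, he⟩
    refine Pv_mono ρ ?_ he2
    rw [bset_inter_eset I J]
    exact eset_subset_bset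
  have hAD : ∀ I J : Set (Fin (n - 1)), (∀ k ∈ I, (k : ℕ) ≠ 1) → (∃ k ∈ J, (k : ℕ) = 1) →
      (∀ k ∈ J, (k : ℕ) ≠ 2) → (∃ k ∈ J, (k : ℕ) = 0) →
      ∀ g, g ∈ Subgroup.closure (τ '' I) → g ∈ Subgroup.closure (τ '' J) →
      g ∈ Subgroup.closure (τ '' (I ∩ J)) := by
    intro I J hI1 hJ1 hJ2 hJ0 g hgI hgJ
    rw [hTA I hI1] at hgI
    rw [hTD J hJ1 hJ2 hJ0] at hgJ
    obtain ⟨d, hd, e, he, rfl⟩ := hdecD (eset J) (hes J) _ hgJ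
    have hd1 : d ∈ Pv ρ ({1} : Set ℕ) := by
      have hdP : d ∈ Pv ρ (({0, 1, 2} : Set ℕ) ∩ (bset I ∪ eset J)) := by
        rw [← hPv]
        refine Subgroup.mem_inf.mpr ⟨hD_le012 hd, ?_⟩
        have h5 : d = (d * e) * e⁻¹ := by group
        rw [h5]
        exact mul_mem (Pv_mono ρ Set.subset_union_left hgI)
          (Pv_mono ρ Set.subset_union_right (inv_mem he))
      refine Pv_mono ρ ?_ hdP
      rintro x ⟨hx012, hxU⟩
      simp only [Set.mem_insert_iff, Set.mem_singleton_iff] at hx012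
      show x ∈ ({1} : Set ℕ)
      rcases hxU with hx | hx
      · rcases bset_elem hx with h | h <;> simp <;> omega
      · have := eset_elem hx; omega
    have hgmem : d * e ∈ Pv ρ (bset I ∩ (({1} : Set ℕ) ∪ eset J)) := by
      rw [← hPv]
      exact Subgroup.mem_inf.mpr ⟨hgI,
        mul_mem (Pv_mono ρ Set.subset_union_left hd1)
          (Pv_mono ρ Set.subset_union_right he)⟩
    rw [hTA (I ∩ J) (fun k hk => hI1 k hk.1)]
    refine Pv_mono ρ ?_ hgmem
    rintro x ⟨hxI, hxU⟩
    rcases hxU with hx1 | hxJ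
    · have hx1' : x = 1 := hx1
      rcases hxI with ⟨_, k, hkI, hk0⟩ | ⟨k, hkI, hk2, hxk⟩
      · obtain ⟨k', hk'J, hk'0⟩ := hJ0
        have hkk : k' = k := Fin.ext (by omega)
        exact Or.inl ⟨hx1', k, ⟨hkI, hkk ▸ hk'J⟩, hk0⟩
      · omega
    · have hx' : x ∈ eset (I ∩ J) := by
        rw [← bset_inter_eset]
        exact ⟨hxI, hxJ⟩
      exact eset_subset_bset hx'
  have hBB : ∀ I J : Set (Fin (n - 1)), (∃ k ∈ I, (k : ℕ) = 1) → (∃ k ∈ I, (k : ℕ) = 2) →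
      (∃ k ∈ J, (k : ℕ) = 1) → (∃ k ∈ J, (k : ℕ) = 2) →
      ∀ g, g ∈ Subgroup.closure (τ '' I) → g ∈ Subgroup.closure (τ '' J) →
      g ∈ Subgroup.closure (τ '' (I ∩ J)) := by
    intro I J hI1 hI2 hJ1 hJ2 g hgI hgJ
    rw [hTB I hI1 hI2] at hgI
    rw [hTB J hJ1 hJ2] at hgJ
    rw [hTB (I ∩ J) (merge_exists hI1 hJ1) (merge_exists hI2 hJ2)]
    have hg : g ∈ Pv ρ ((({0, 2} : Set ℕ) ∪ bset I) ∩ (({0, 2} : Set ℕ) ∪ bset J)) := by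
      rw [← hPv]
      exact Subgroup.mem_inf.mpr ⟨hgI, hgJ⟩
    refine Pv_mono ρ ?_ hg
    rintro x ⟨hxI, hxJ⟩
    rcases hxI with h02 | hxI
    · exact Or.inl h02
    rcases hxJ with h02 | hxJ
    · exact Or.inl h02
    · refine Or.inr ?_
      rw [bset_inter]
      exact ⟨hxI, hxJ⟩
  have hBC : ∀ I J : Set (Fin (n - 1)), (∃ k ∈ I, (k : ℕ) = 1) → (∃ k ∈ I, (k : ℕ) = 2) →
      (∃ k ∈ J, (k : ℕ) = 1) → (∀ k ∈ J, (k : ℕ) ≠ 0) → (∀ k ∈ J, (k : ℕ) ≠ 2) →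
      ∀ g, g ∈ Subgroup.closure (τ '' I) → g ∈ Subgroup.closure (τ '' J) →
      g ∈ Subgroup.closure (τ '' (I ∩ J)) := by
    intro I J hI1 hI2 hJ1 hJ0 hJ2 g hgI hgJ
    rw [hTB I hI1 hI2] at hgI
    rw [hTC J hJ1 hJ0 hJ2] at hgJ
    obtain ⟨u, hu, e, he, rfl⟩ := hdecC (eset J) (hes J) _ hgJ
    have he2 : e ∈ Pv ρ (eset (I ∩ J)) := by
      have he' : e ∈ Pv ρ (eset J ∩ (({0, 2} : Set ℕ) ∪ bset I)) := by
        rw [← hPv]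
        refine Subgroup.mem_inf.mpr ⟨he, ?_⟩
        have h5 : e = u⁻¹ * (u * e) := by group
        rw [h5]
        exact mul_mem (Pv_mono ρ Set.subset_union_left (hCb_le02 (inv_mem hu))) hgI
      refine Pv_mono ρ ?_ he'
      rintro x ⟨hxJ, hxU⟩
      have h4 := eset_elem hxJ
      rcases hxU with h02 | hxI
      · simp only [Set.mem_insert_iff, Set.mem_singleton_iff] at h02; omega
      · rw [← bset_inter_eset]
        exact ⟨hxI, hxJ⟩
    rw [hTC (I ∩ J) (merge_exists hI1 hJ1) (fun k hk => hJ0 k hk.2) (fun k hk => hJ2 k hk.2)]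
    exact mul_mem ((le_sup_left : Subgroup.closure ({b} : Set G) ≤ _) hu)
      ((le_sup_right : Pv ρ (eset (I ∩ J)) ≤ _) he2)
  have hBD : ∀ I J : Set (Fin (n - 1)), (∃ k ∈ I, (k : ℕ) = 1) → (∃ k ∈ I, (k : ℕ) = 2) →
      (∃ k ∈ J, (k : ℕ) = 1) → (∀ k ∈ J, (k : ℕ) ≠ 2) → (∃ k ∈ J, (k : ℕ) = 0) →
      ∀ g, g ∈ Subgroup.closure (τ '' I) → g ∈ Subgroup.closure (τ '' J) →
      g ∈ Subgroup.closure (τ '' (I ∩ J)) := by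
    intro I J hI1 hI2 hJ1 hJ2 hJ0 g hgI hgJ
    rw [hTB I hI1 hI2] at hgI
    rw [hTD J hJ1 hJ2 hJ0] at hgJ
    obtain ⟨d, hd, e, he, rfl⟩ := hdecD (eset J) (hes J) _ hgJ
    have he2 : e ∈ Pv ρ (eset (I ∩ J)) := by
      have he' : e ∈ Pv ρ (eset J ∩ (({0, 1, 2} : Set ℕ) ∪ (({0, 2} : Set ℕ) ∪ bset I))) := by
        rw [← hPv]
        refine Subgroup.mem_inf.mpr ⟨he, ?_⟩
        have h5 : e = d⁻¹ * (d * e) := by group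
        rw [h5]
        exact mul_mem (Pv_mono ρ Set.subset_union_left (hD_le012 (inv_mem hd)))
          (Pv_mono ρ Set.subset_union_right hgI)
      refine Pv_mono ρ ?_ he'
      rintro x ⟨hxJ, hxU⟩
      have h4 := eset_elem hxJ
      rcases hxU with h012 | h02b
      · simp only [Set.mem_insert_iff, Set.mem_singleton_iff] at h012; omega
      rcases h02b with h02 | hxI
      · simp only [Set.mem_insert_iff, Set.mem_singleton_iff] at h02; omega
      · rw [← bset_inter_eset]
        exact ⟨hxI, hxJ⟩
    by_cases h0I : ∃ k ∈ I, (k : ℕ) = 0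
    · rw [hTD (I ∩ J) (merge_exists hI1 hJ1) (fun k hk => hJ2 k hk.2) (merge_exists h0I hJ0)]
      exact mul_mem ((le_sup_left : Dgrp ≤ _) hd) ((le_sup_right : Pv ρ (eset (I ∩ J)) ≤ _) he2)
    · push_neg at h0I
      have hd02 : d ∈ Pv ρ ({0, 2} : Set ℕ) := by
        have hdP : d ∈ Pv ρ (({0, 1, 2} : Set ℕ) ∩ ((({0, 2} : Set ℕ) ∪ bset I) ∪ eset J)) := by
          rw [← hPv]
          refine Subgroup.mem_inf.mpr ⟨hD_le012 hd, ?_⟩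
          have h5 : d = (d * e) * e⁻¹ := by group
          rw [h5]
          exact mul_mem (Pv_mono ρ Set.subset_union_left hgI)
            (Pv_mono ρ Set.subset_union_right (inv_mem he))
        refine Pv_mono ρ ?_ hdP
        rintro x ⟨h012, hxU⟩
        simp only [Set.mem_insert_iff, Set.mem_singleton_iff] at h012
        show x ∈ ({0, 2} : Set ℕ)
        rcases hxU with (h02 | hxI) | hxJ
        · exact h02
        · rcases hxI with ⟨hx1, k, hkI, hk0⟩ | ⟨k, hkI, hk2, hxk⟩
          · exact absurd hk0 (h0I k hkI)
          · simp only [Set.mem_insert_iff, Set.mem_singleton_iff]; omega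
        · have := eset_elem hxJ; omega
      rw [hTC (I ∩ J) (merge_exists hI1 hJ1) (fun k hk => h0I k hk.1) (fun k hk => hJ2 k hk.2)]
      rcases hD02 d hd hd02 with rfl | rfl
      · exact mul_mem ((le_sup_left : Subgroup.closure ({b} : Set G) ≤ _) (one_mem _))
          ((le_sup_right : Pv ρ (eset (I ∩ J)) ≤ _) he2)
      · exact mul_mem ((le_sup_left : Subgroup.closure ({b} : Set G) ≤ _)
          (Subgroup.subset_closure rfl))
          ((le_sup_right : Pv ρ (eset (I ∩ J)) ≤ _) he2)
  have hCC : ∀ I J : Set (Fin (n - 1)), (∃ k ∈ I, (k : ℕ) = 1) → (∀ k ∈ I, (k : ℕ) ≠ 0) →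
      (∀ k ∈ I, (k : ℕ) ≠ 2) → (∃ k ∈ J, (k : ℕ) = 1) → (∀ k ∈ J, (k : ℕ) ≠ 0) →
      (∀ k ∈ J, (k : ℕ) ≠ 2) →
      ∀ g, g ∈ Subgroup.closure (τ '' I) → g ∈ Subgroup.closure (τ '' J) →
      g ∈ Subgroup.closure (τ '' (I ∩ J)) := by
    intro I J hI1 hI0 hI2 hJ1 hJ0 hJ2 g hgI hgJ
    rw [hTC I hI1 hI0 hI2] at hgI
    rw [hTC J hJ1 hJ0 hJ2] at hgJ
    obtain ⟨u, hu, e, he, rfl⟩ := hdecC (eset I) (hes I) _ hgI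
    obtain ⟨u', hu', e', he', heq⟩ := hdecC (eset J) (hes J) _ hgJ
    have hkey : u'⁻¹ * u ∈ Pv ρ ((({0, 2}) : Set ℕ) ∩ (eset I ∪ eset J)) := by
      rw [← hPv]
      refine Subgroup.mem_inf.mpr
        ⟨mul_mem (hCb_le02 (inv_mem hu')) (hCb_le02 hu), ?_⟩
      have h5 : u'⁻¹ * u = e' * e⁻¹ := by
        have h6 := congrArg (fun z => u'⁻¹ * z * e⁻¹) heq
        simpa [mul_assoc] using h6
      rw [h5]
      exact mul_mem (Pv_mono ρ Set.subset_union_right he')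
        (Pv_mono ρ Set.subset_union_left (inv_mem he))
    have hempty : ((({0, 2}) : Set ℕ) ∩ (eset I ∪ eset J)) = ∅ := by
      ext x
      simp only [Set.mem_inter_iff, Set.mem_union, Set.mem_insert_iff, Set.mem_singleton_iff,
        Set.mem_empty_iff_false, iff_false, not_and]
      rintro h02 (hx | hx) <;> [have := eset_elem hx; have := eset_elem hx] <;> omega
    rw [hempty, Pv_bot] at hkey
    have huu : u = u' := by
      have h7 := Subgroup.mem_bot.mp hkey
      have h8 : u' = u := by
        have := inv_mul_eq_one.mp h7
        exact this
      exact h8.symm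
    have hee : e = e' := by
      rw [← huu] at heq
      exact mul_left_cancel heq
    have he2 : e ∈ Pv ρ (eset (I ∩ J)) := by
      rw [eset_inter, ← hPv]
      exact Subgroup.mem_inf.mpr ⟨he, hee ▸ he'⟩
    rw [hTC (I ∩ J) (merge_exists hI1 hJ1) (fun k hk => hI0 k hk.1) (fun k hk => hI2 k hk.1)]
    exact mul_mem ((le_sup_left : Subgroup.closure ({b} : Set G) ≤ _) hu)
      ((le_sup_right : Pv ρ (eset (I ∩ J)) ≤ _) he2)
  have hCD : ∀ I J : Set (Fin (n - 1)), (∃ k ∈ I, (k : ℕ) = 1) → (∀ k ∈ I, (k : ℕ) ≠ 0) →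
      (∀ k ∈ I, (k : ℕ) ≠ 2) → (∃ k ∈ J, (k : ℕ) = 1) → (∀ k ∈ J, (k : ℕ) ≠ 2) →
      (∃ k ∈ J, (k : ℕ) = 0) →
      ∀ g, g ∈ Subgroup.closure (τ '' I) → g ∈ Subgroup.closure (τ '' J) →
      g ∈ Subgroup.closure (τ '' (I ∩ J)) := by
    intro I J hI1 hI0 hI2 hJ1 hJ2 hJ0 g hgI hgJ
    rw [hTC I hI1 hI0 hI2] at hgI
    rw [hTD J hJ1 hJ2 hJ0] at hgJ
    obtain ⟨u, hu, e, he, rfl⟩ := hdecC (eset I) (hes I) _ hgI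
    obtain ⟨d, hd, e', he', heq⟩ := hdecD (eset J) (hes J) _ hgJ
    have hkey : d⁻¹ * u ∈ Pv ρ ((({0, 1, 2}) : Set ℕ) ∩ (eset I ∪ eset J)) := by
      rw [← hPv]
      refine Subgroup.mem_inf.mpr
        ⟨mul_mem (hD_le012 (inv_mem hd)) (hD_le012 (hCb_leD hu)), ?_⟩
      have h5 : d⁻¹ * u = e' * e⁻¹ := by
        have h6 := congrArg (fun z => d⁻¹ * z * e⁻¹) heq
        simpa [mul_assoc] using h6
      rw [h5]
      exact mul_mem (Pv_mono ρ Set.subset_union_right he')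
        (Pv_mono ρ Set.subset_union_left (inv_mem he))
    have hempty : ((({0, 1, 2}) : Set ℕ) ∩ (eset I ∪ eset J)) = ∅ := by
      ext x
      simp only [Set.mem_inter_iff, Set.mem_union, Set.mem_insert_iff, Set.mem_singleton_iff,
        Set.mem_empty_iff_false, iff_false, not_and]
      rintro h02 (hx | hx) <;> [have := eset_elem hx; have := eset_elem hx] <;> omega
    rw [hempty, Pv_bot] at hkey
    have huu : u = d := by
      have h7 := Subgroup.mem_bot.mp hkey
      have h8 : d = u := inv_mul_eq_one.mp h7
      exact h8.symm
    have hee : e = e' := by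
      rw [← huu] at heq
      exact mul_left_cancel heq
    have he2 : e ∈ Pv ρ (eset (I ∩ J)) := by
      rw [eset_inter, ← hPv]
      exact Subgroup.mem_inf.mpr ⟨he, hee ▸ he'⟩
    rw [hTC (I ∩ J) (merge_exists hI1 hJ1) (fun k hk => hI0 k hk.1) (fun k hk => hI2 k hk.1)]
    exact mul_mem ((le_sup_left : Subgroup.closure ({b} : Set G) ≤ _) hu)
      ((le_sup_right : Pv ρ (eset (I ∩ J)) ≤ _) he2)
  have hDD : ∀ I J : Set (Fin (n - 1)), (∃ k ∈ I, (k : ℕ) = 1) → (∀ k ∈ I, (k : ℕ) ≠ 2) →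
      (∃ k ∈ I, (k : ℕ) = 0) → (∃ k ∈ J, (k : ℕ) = 1) → (∀ k ∈ J, (k : ℕ) ≠ 2) →
      (∃ k ∈ J, (k : ℕ) = 0) →
      ∀ g, g ∈ Subgroup.closure (τ '' I) → g ∈ Subgroup.closure (τ '' J) →
      g ∈ Subgroup.closure (τ '' (I ∩ J)) := by
    intro I J hI1 hI2 hI0 hJ1 hJ2 hJ0 g hgI hgJ
    rw [hTD I hI1 hI2 hI0] at hgI
    rw [hTD J hJ1 hJ2 hJ0] at hgJ
    obtain ⟨d, hd, e, he, rfl⟩ := hdecD (eset I) (hes I) _ hgI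
    obtain ⟨d', hd', e', he', heq⟩ := hdecD (eset J) (hes J) _ hgJ
    have hkey : d'⁻¹ * d ∈ Pv ρ ((({0, 1, 2}) : Set ℕ) ∩ (eset I ∪ eset J)) := by
      rw [← hPv]
      refine Subgroup.mem_inf.mpr
        ⟨mul_mem (hD_le012 (inv_mem hd')) (hD_le012 hd), ?_⟩
      have h5 : d'⁻¹ * d = e' * e⁻¹ := by
        have h6 := congrArg (fun z => d'⁻¹ * z * e⁻¹) heq
        simpa [mul_assoc] using h6
      rw [h5]
      exact mul_mem (Pv_mono ρ Set.subset_union_right he')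
        (Pv_mono ρ Set.subset_union_left (inv_mem he))
    have hempty : ((({0, 1, 2}) : Set ℕ) ∩ (eset I ∪ eset J)) = ∅ := by
      ext x
      simp only [Set.mem_inter_iff, Set.mem_union, Set.mem_insert_iff, Set.mem_singleton_iff,
        Set.mem_empty_iff_false, iff_false, not_and]
      rintro h02 (hx | hx) <;> [have := eset_elem hx; have := eset_elem hx] <;> omega
    rw [hempty, Pv_bot] at hkey
    have huu : d = d' := by
      have h7 := Subgroup.mem_bot.mp hkey
      have h8 : d' = d := inv_mul_eq_one.mp h7
      exact h8.symm
    have hee : e = e' := by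
      rw [← huu] at heq
      exact mul_left_cancel heq
    have he2 : e ∈ Pv ρ (eset (I ∩ J)) := by
      rw [eset_inter, ← hPv]
      exact Subgroup.mem_inf.mpr ⟨he, hee ▸ he'⟩
    rw [hTD (I ∩ J) (merge_exists hI1 hJ1) (fun k hk => hI2 k hk.1) (merge_exists hI0 hJ0)]
    exact mul_mem ((le_sup_left : Dgrp ≤ _) hd)
      ((le_sup_right : Pv ρ (eset (I ∩ J)) ≤ _) he2)
  -- dispatch
  have hdisp : ∀ I J : Set (Fin (n - 1)), ∀ g, g ∈ Subgroup.closure (τ '' I) →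
      g ∈ Subgroup.closure (τ '' J) → g ∈ Subgroup.closure (τ '' (I ∩ J)) := by
    have hswap : ∀ I J : Set (Fin (n - 1)), ∀ g, g ∈ Subgroup.closure (τ '' (J ∩ I)) →
        g ∈ Subgroup.closure (τ '' (I ∩ J)) := by
      intro I J g h
      rwa [Set.inter_comm] at h
    intro I J g hgI hgJ
    by_cases h1I : ∃ k ∈ I, (k : ℕ) = 1
    · by_cases h2I : ∃ k ∈ I, (k : ℕ) = 2
      · by_cases h1J : ∃ k ∈ J, (k : ℕ) = 1
        · by_cases h2J : ∃ k ∈ J, (k : ℕ) = 2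
          · exact hBB I J h1I h2I h1J h2J g hgI hgJ
          · push_neg at h2J
            by_cases h0J : ∃ k ∈ J, (k : ℕ) = 0
            · exact hBD I J h1I h2I h1J h2J h0J g hgI hgJ
            · push_neg at h0J
              exact hBC I J h1I h2I h1J h0J h2J g hgI hgJ
        · push_neg at h1J
          exact hswap I J g (hAB J I h1J h1I h2I g hgJ hgI)
      · push_neg at h2I
        by_cases h0I : ∃ k ∈ I, (k : ℕ) = 0
        · -- I type D
          by_cases h1J : ∃ k ∈ J, (k : ℕ) = 1
          · by_cases h2J : ∃ k ∈ J, (k : ℕ) = 2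
            · exact hswap I J g (hBD J I h1J h2J h1I h2I h0I g hgJ hgI)
            · push_neg at h2J
              by_cases h0J : ∃ k ∈ J, (k : ℕ) = 0
              · exact hDD I J h1I h2I h0I h1J h2J h0J g hgI hgJ
              · push_neg at h0J
                exact hswap I J g (hCD J I h1J h0J h2J h1I h2I h0I g hgJ hgI)
          · push_neg at h1J
            exact hswap I J g (hAD J I h1J h1I h2I h0I g hgJ hgI)
        · push_neg at h0I
          -- I type C
          by_cases h1J : ∃ k ∈ J, (k : ℕ) = 1
          · by_cases h2J : ∃ k ∈ J, (k : ℕ) = 2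
            · exact hswap I J g (hBC J I h1J h2J h1I h0I h2I g hgJ hgI)
            · push_neg at h2J
              by_cases h0J : ∃ k ∈ J, (k : ℕ) = 0
              · exact hCD I J h1I h0I h2I h1J h2J h0J g hgI hgJ
              · push_neg at h0J
                exact hCC I J h1I h0I h2I h1J h0J h2J g hgI hgJ
          · push_neg at h1J
            exact hswap I J g (hAC J I h1J h1I h0I h2I g hgJ hgI)
    · push_neg at h1I
      by_cases h1J : ∃ k ∈ J, (k : ℕ) = 1
      · by_cases h2J : ∃ k ∈ J, (k : ℕ) = 2
        · exact hAB I J h1I h1J h2J g hgI hgJ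
        · push_neg at h2J
          by_cases h0J : ∃ k ∈ J, (k : ℕ) = 0
          · exact hAD I J h1I h1J h2J h0J g hgI hgJ
          · push_neg at h0J
            exact hAC I J h1I h1J h0J h2J g hgI hgJ
      · push_neg at h1J
        exact hAA I J h1I h1J g hgI hgJ
  -- final assembly
  refine ⟨⟨?_, ?_, ?_⟩, ?_⟩
  · -- involutions
    intro k
    by_cases hk0 : (k : ℕ) = 0
    · rw [hτ0 k hk0]
      exact ⟨hsq _, hne _⟩
    · by_cases hk1 : (k : ℕ) = 1
      · rw [hτ1 k hk1]
        exact ⟨hb_sq, hb_ne⟩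
      · rw [hτhi k ⟨(k : ℕ) + 1, by have := k.isLt; omega⟩ (by omega) rfl]
        exact ⟨hsq _, hne _⟩
  · -- string property
    intro i j hij
    by_cases hi0 : (i : ℕ) = 0
    · rw [hτ0 i hi0, hτhi j ⟨(j : ℕ) + 1, by have := j.isLt; omega⟩ (by omega) rfl]
      exact hρ1high _ (show (3 : ℕ) ≤ (j : ℕ) + 1 by omega)
    · by_cases hi1 : (i : ℕ) = 1
      · rw [hτ1 i hi1, hτhi j ⟨(j : ℕ) + 1, by have := j.isLt; omega⟩ (by omega) rfl]
        exact hbhigh _ (show (4 : ℕ) ≤ (j : ℕ) + 1 by omega)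
      · rw [hτhi i ⟨(i : ℕ) + 1, by have := i.isLt; omega⟩ (by omega) rfl,
          hτhi j ⟨(j : ℕ) + 1, by have := j.isLt; omega⟩ (by omega) rfl]
        exact hcomm _ _ (show (i : ℕ) + 1 + 1 < (j : ℕ) + 1 by omega)
  · -- intersection property
    intro I J
    refine le_antisymm ?_ ?_
    · intro g hg
      obtain ⟨hgI, hgJ⟩ := Subgroup.mem_inf.mp hg
      exact hdisp I J g hgI hgJ
    · exact le_inf (Subgroup.closure_mono (Set.image_mono Set.inter_subset_left))
        (Subgroup.closure_mono (Set.image_mono Set.inter_subset_right))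
  · -- generation
    have h1u : ∃ k ∈ (Set.univ : Set (Fin (n - 1))), (k : ℕ) = 1 :=
      ⟨⟨1, by omega⟩, trivial, rfl⟩
    have h2u : ∃ k ∈ (Set.univ : Set (Fin (n - 1))), (k : ℕ) = 2 :=
      ⟨⟨2, by omega⟩, trivial, rfl⟩
    rw [← Set.image_univ, hTB Set.univ h1u h2u]
    have huniv : {j : Fin n | (j : ℕ) ∈ (({0, 2} : Set ℕ) ∪ bset (Set.univ : Set (Fin (n - 1))))}
        = Set.univ := by
      ext j
      simp only [Set.mem_setOf_eq, Set.mem_univ, iff_true]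
      by_cases hj0 : (j : ℕ) = 0
      · exact Or.inl (Or.inl hj0)
      · by_cases hj2 : (j : ℕ) = 2
        · exact Or.inl (Or.inr hj2)
        · by_cases hj1 : (j : ℕ) = 1
          · exact Or.inr (Or.inl ⟨hj1, ⟨0, by omega⟩, trivial, rfl⟩)
          · refine Or.inr (Or.inr ⟨⟨(j : ℕ) - 1, by have := j.isLt; omega⟩, trivial,
              show 2 ≤ (j : ℕ) - 1 by omega, show (j : ℕ) = (j : ℕ) - 1 + 1 by omega⟩)
    rw [Pv, huniv, Set.image_univ]
    exact hgen
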